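/- The Appell function satisfies F_1(1/3; 1/2, 1/2; 4/3 | −1/2, −1/8) = Γ(1/3)^3 / (√27 · 2^{1/3} · π). Equivalently, (1/3) ∫_0^1 u^{−2/3} ((1 + u/2)(1 + u/8))^{−1/2} du = Γ(1/3)^3 / (√27 · 2^{1/3} · π). -/

import Mathlib

open MeasureTheory Real Set

noncomputable def lauricellaFD (n : ℕ) (a : ℂ) (b : Fin n → ℂ) (c : ℂ) (x : Fin n → ℂ) : ℂ :=
  (Complex.Gamma c / (Complex.Gamma a * Complex.Gamma (c - a))) *
    ∫ u in (0:ℝ)..1, (u : ℂ) ^ (a - 1) * ((1 : ℂ) - u) ^ (c - a - 1) *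
      ∏ k, ((1 : ℂ) - x k * u) ^ (-(b k))

noncomputable def appellF1 (a b₁ b₂ c x₁ x₂ : ℂ) : ℂ :=
  lauricellaFD 2 a ![b₁, b₂] c ![x₁, x₂]

noncomputable def ellipticK (k : ℝ) : ℝ :=
  ∫ θ in (0:ℝ)..(Real.pi/2), (1 - k ^ 2 * Real.sin θ ^ 2) ^ (-(1:ℝ)/2)

-- real beta integral
lemma real_betaIntegral {a b : ℝ} (ha : 0 < a) (hb : 0 < b) :
    ∫ x in (0:ℝ)..1, x ^ (a - 1) * (1 - x) ^ (b - 1) =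
      Real.Gamma a * Real.Gamma b / Real.Gamma (a + b) := by
  have hab : 0 < a + b := by linarith
  have h := Complex.Gamma_mul_Gamma_eq_betaIntegral (s := (a:ℂ)) (t := (b:ℂ))
      (by simpa using ha) (by simpa using hb)
  have hne : Complex.Gamma ((a:ℂ) + b) ≠ 0 :=
    Complex.Gamma_ne_zero_of_re_pos (by simpa using hab)
  have hint : Complex.betaIntegral a b =
      ((∫ x in (0:ℝ)..1, x ^ (a - 1) * (1 - x) ^ (b - 1) : ℝ) : ℂ) := by
    rw [← intervalIntegral.integral_ofReal]
    unfold Complex.betaIntegral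
    refine intervalIntegral.integral_congr fun x hx => ?_
    rw [Set.uIcc_of_le (by norm_num : (0:ℝ) ≤ 1)] at hx
    rw [Complex.ofReal_mul, Complex.ofReal_cpow hx.1, Complex.ofReal_cpow (by linarith [hx.2])]
    push_cast
    ring
  have : Complex.betaIntegral a b =
      Complex.Gamma a * Complex.Gamma b / Complex.Gamma ((a:ℂ) + b) := by
    rw [h, mul_div_cancel_left₀ _ hne]
  rw [this] at hint
  rw [← Complex.ofReal_add, Complex.Gamma_ofReal, Complex.Gamma_ofReal, Complex.Gamma_ofReal,
      ← Complex.ofReal_mul, ← Complex.ofReal_div] at hint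
  exact_mod_cast hint.symm
noncomputable def phi (u : ℝ) : ℝ := 27 * u / (u + 2) ^ 3
noncomputable def phi' (u : ℝ) : ℝ := 54 * (1 - u) / (u + 2) ^ 4

lemma phi_hasDeriv {u : ℝ} (hu : u ∈ Set.Icc (0:ℝ) 1) : HasDerivAt phi (phi' u) u := by
  have h2 : u + 2 ≠ 0 := by nlinarith [hu.1, hu.2]
  have h := (((hasDerivAt_id u).const_mul 27).div
      (((hasDerivAt_id u).add_const 2).pow 3) (pow_ne_zero 3 h2))
  simp only [id] at h
  refine h.congr_deriv ?_
  unfold phi'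
  simp only [Pi.pow_apply]
  field_simp
  ring

lemma one_sub_phi {u : ℝ} (h2 : u + 2 ≠ 0) :
    1 - phi u = (u + 8) * (1 - u) ^ 2 / (u + 2) ^ 3 := by
  unfold phi
  field_simp
  ring

lemma phi_strictMono : StrictMonoOn phi (Set.Icc (0:ℝ) 1) := by
  apply strictMonoOn_of_deriv_pos (convex_Icc 0 1)
  · apply ContinuousOn.div
    · fun_prop
    · fun_prop
    · intro u hu
      have : u + 2 ≠ 0 := by nlinarith [hu.1, hu.2]
      positivity
  · intro u hu
    rw [interior_Icc] at hu
    rw [(phi_hasDeriv (Set.mem_Icc_of_Ioo hu)).deriv]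
    unfold phi'
    have h1 : 0 < 1 - u := by linarith [hu.2]
    have h2 : (0:ℝ) < u + 2 := by linarith [hu.1]
    positivity

lemma phi_zero : phi 0 = 0 := by unfold phi; norm_num
lemma phi_one : phi 1 = 1 := by unfold phi; norm_num

lemma phi_image : phi '' Set.Ioo (0:ℝ) 1 = Set.Ioo (0:ℝ) 1 := by
  apply Set.Subset.antisymm
  · rintro x ⟨u, hu, rfl⟩
    constructor
    · have := phi_strictMono (Set.left_mem_Icc.2 zero_le_one)
        (Set.mem_Icc_of_Ioo hu) hu.1
      rwa [phi_zero] at this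
    · have := phi_strictMono (Set.mem_Icc_of_Ioo hu)
        (Set.right_mem_Icc.2 zero_le_one) hu.2
      rwa [phi_one] at this
  · have hc : ContinuousOn phi (Set.Icc 0 1) := by
      apply ContinuousOn.div
      · fun_prop
      · fun_prop
      · intro u hu
        have : u + 2 ≠ 0 := by nlinarith [hu.1, hu.2]
        positivity
    have := intermediate_value_Ioo (zero_le_one) hc
    rwa [phi_zero, phi_one] at this

lemma pointwise_key {u : ℝ} (hu : u ∈ Set.Ioo (0:ℝ) 1) :
    54 * (1 - u) / (u + 2) ^ 4 *
      (phi u ^ ((1:ℝ)/3 - 1) * (1 - phi u) ^ ((1:ℝ)/2 - 1)) =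
    3/2 * (u ^ (-(2:ℝ)/3) * ((1 + u/2) * (1 + u/8)) ^ (-(1:ℝ)/2)) := by
  obtain ⟨hu0, hu1⟩ := hu
  have hB : (0:ℝ) < u + 2 := by linarith
  have hC : (0:ℝ) < u + 8 := by linarith
  have hD : (0:ℝ) < 1 - u := by linarith
  set X := u ^ (-(2:ℝ)/3) with hX
  set Y := (u + 8) ^ (-(1:ℝ)/2) with hY
  set t := (u + 2) ^ ((1:ℝ)/2) with ht
  have htpos : 0 < t := Real.rpow_pos_of_pos hB _
  have ht2 : t ^ 2 = u + 2 := by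
    rw [ht, ← Real.rpow_natCast ((u+2) ^ ((1:ℝ)/2)) 2, ← Real.rpow_mul hB.le]
    norm_num
  have ht3 : (u + 2) ^ ((3:ℝ)/2) = t ^ 3 := by
    rw [ht, ← Real.rpow_natCast ((u+2) ^ ((1:ℝ)/2)) 3, ← Real.rpow_mul hB.le]
    norm_num
  have e1 : phi u ^ ((1:ℝ)/3 - 1) = 1/9 * X * (u + 2) ^ (2:ℕ) := by
    rw [show phi u = 27 * u / (u + 2) ^ 3 from rfl,
      Real.div_rpow (by positivity) (by positivity),
      Real.mul_rpow (by norm_num) hu0.le]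
    have c27 : (27:ℝ) ^ ((1:ℝ)/3 - 1) = 1/9 := by
      rw [show (27:ℝ) = 3 ^ (3:ℕ) by norm_num, ← Real.rpow_natCast (3:ℝ) 3,
        ← Real.rpow_mul (by norm_num)]
      rw [show (3:ℕ) * ((1:ℝ)/3 - 1) = ((-2:ℤ):ℝ) by push_cast; ring]
      rw [Real.rpow_intCast]
      norm_num
    have h3 : ((u + 2) ^ (3:ℕ)) ^ ((1:ℝ)/3 - 1) = ((u + 2) ^ (2:ℕ))⁻¹ := by
      rw [← Real.rpow_natCast (u+2) 3, ← Real.rpow_mul hB.le]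
      rw [show (3:ℕ) * ((1:ℝ)/3 - 1) = ((-2:ℤ):ℝ) by push_cast; ring]
      rw [Real.rpow_intCast, zpow_neg]
      norm_cast
    rw [c27, h3, hX]
    rw [show u ^ ((1:ℝ)/3 - 1) = u ^ (-(2:ℝ)/3) by norm_num]
    field_simp
  have e2 : (1 - phi u) ^ ((1:ℝ)/2 - 1) = Y * (1 - u)⁻¹ * t ^ 3 := by
    rw [one_sub_phi hB.ne', Real.div_rpow (by positivity) (by positivity),
      Real.mul_rpow hC.le (by positivity)]
    have p1 : ((1 - u) ^ (2:ℕ)) ^ ((1:ℝ)/2 - 1) = (1 - u)⁻¹ := by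
      rw [← Real.rpow_natCast (1-u) 2, ← Real.rpow_mul hD.le]
      rw [show (2:ℕ) * ((1:ℝ)/2 - 1) = -1 by push_cast; ring]
      exact Real.rpow_neg_one _
    have p2 : ((u + 2) ^ (3:ℕ)) ^ ((1:ℝ)/2 - 1) = (t ^ 3)⁻¹ := by
      rw [← Real.rpow_natCast (u+2) 3, ← Real.rpow_mul hB.le]
      rw [show (3:ℕ) * ((1:ℝ)/2 - 1) = -((3:ℝ)/2) by push_cast; ring]
      rw [Real.rpow_neg hB.le, ht3]
    have p3 : (u + 8) ^ ((1:ℝ)/2 - 1) = Y := by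
      rw [hY, show (1:ℝ)/2 - 1 = -(1:ℝ)/2 by norm_num]
    rw [p1, p2, p3]
    field_simp
  have e3 : ((1 + u/2) * (1 + u/8)) ^ (-(1:ℝ)/2) = 4 * t⁻¹ * Y := by
    rw [show (1 + u/2) * (1 + u/8) = (u + 2) * (u + 8) / 16 by ring,
      Real.div_rpow (by positivity) (by norm_num),
      Real.mul_rpow hB.le hC.le]
    have c16 : (16:ℝ) ^ (-(1:ℝ)/2) = 1/4 := by
      rw [show (16:ℝ) = 4 ^ (2:ℕ) by norm_num, ← Real.rpow_natCast (4:ℝ) 2,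
        ← Real.rpow_mul (by norm_num)]
      rw [show (2:ℕ) * (-(1:ℝ)/2) = ((-1:ℤ):ℝ) by push_cast; ring]
      rw [Real.rpow_intCast]
      norm_num
    have cB : (u + 2) ^ (-(1:ℝ)/2) = t⁻¹ := by
      rw [show -(1:ℝ)/2 = -((1:ℝ)/2) by norm_num, Real.rpow_neg hB.le, ht]
    rw [c16, cB, hY]
    ring
  rw [e1, e2, e3, ← ht2]
  field_simp
  ring

lemma subst_key :
    ∫ x in (0:ℝ)..1, x ^ ((1:ℝ)/3 - 1) * (1 - x) ^ ((1:ℝ)/2 - 1) =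
      3/2 * ∫ u in (0:ℝ)..1, u ^ (-(2:ℝ)/3) * ((1 + u/2) * (1 + u/8)) ^ (-(1:ℝ)/2) := by
  have himg := integral_image_eq_integral_abs_deriv_smul measurableSet_Ioo
      (fun u hu => (phi_hasDeriv (Set.mem_Icc_of_Ioo hu)).hasDerivWithinAt)
      (phi_strictMono.injOn.mono Set.Ioo_subset_Icc_self)
      (fun x => x ^ ((1:ℝ)/3 - 1) * (1 - x) ^ ((1:ℝ)/2 - 1))
  rw [phi_image] at himg
  rw [intervalIntegral.integral_of_le zero_le_one, intervalIntegral.integral_of_le zero_le_one,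
    integral_Ioc_eq_integral_Ioo, integral_Ioc_eq_integral_Ioo, himg,
    ← MeasureTheory.integral_const_mul]
  refine setIntegral_congr_fun measurableSet_Ioo fun u hu => ?_
  have hpos : 0 < phi' u := by
    unfold phi'
    have h1 : 0 < 1 - u := by linarith [hu.2]
    have h2 : (0:ℝ) < u + 2 := by linarith [hu.1]
    positivity
  rw [smul_eq_mul, abs_of_pos hpos]
  show phi' u * _ = _
  unfold phi'
  exact pointwise_key hu
lemma gamma_algebra :
    (1/3 : ℝ) * (2/3 * (Real.Gamma (1/3) * Real.Gamma (1/2) / Real.Gamma (5/6))) =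
      Real.Gamma (1/3) ^ 3 / (Real.sqrt 27 * (2:ℝ) ^ ((1:ℝ)/3) * π) := by
  have hπ : (0:ℝ) < π := pi_pos
  set G3 := Real.Gamma (1/3) with hG3def
  have hG3 : 0 < G3 := Real.Gamma_pos_of_pos (by norm_num)
  have hG23 : 0 < Real.Gamma (2/3) := Real.Gamma_pos_of_pos (by norm_num)
  have hG16 : 0 < Real.Gamma (1/6) := Real.Gamma_pos_of_pos (by norm_num)
  have hG56 : 0 < Real.Gamma (5/6) := Real.Gamma_pos_of_pos (by norm_num)
  set a := (2:ℝ) ^ ((1:ℝ)/3) with hadef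
  set b := Real.sqrt 3 with hbdef
  set c := Real.sqrt π with hcdef
  have ha : 0 < a := Real.rpow_pos_of_pos (by norm_num) _
  have hb : 0 < b := Real.sqrt_pos.2 (by norm_num)
  have hc : 0 < c := Real.sqrt_pos.2 hπ
  have ha3 : a ^ 3 = 2 := by
    rw [hadef, ← Real.rpow_natCast ((2:ℝ) ^ ((1:ℝ)/3)) 3, ← Real.rpow_mul (by norm_num)]
    norm_num
  have hb2 : b ^ 2 = 3 := Real.sq_sqrt (by norm_num)
  have hc2 : c ^ 2 = π := Real.sq_sqrt hπ.le
  have h27 : Real.sqrt 27 = b ^ 3 := by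
    have hb3 : b ^ 3 = 3 * b := by rw [pow_succ, hb2]
    rw [hb3, hbdef, show (27:ℝ) = 3^2 * 3 by norm_num, Real.sqrt_mul (by positivity),
      Real.sqrt_sq (by norm_num)]
  have hpow2 : (2:ℝ) ^ ((2:ℝ)/3) = a ^ 2 := by
    rw [hadef, ← Real.rpow_natCast ((2:ℝ) ^ ((1:ℝ)/3)) 2, ← Real.rpow_mul (by norm_num)]
    norm_num
  -- reflection at 1/3
  have h13 : b * (G3 * Real.Gamma (2/3)) = 2 * π := by
    have h := Real.Gamma_mul_Gamma_one_sub (1/3)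
    rw [show (1:ℝ) - 1/3 = 2/3 by norm_num, show π * (1/3 : ℝ) = π/3 by ring,
      Real.sin_pi_div_three] at h
    rw [hG3def, hbdef, h]
    rw [div_div_eq_mul_div]
    have h3 : Real.sqrt 3 ≠ 0 := by positivity
    field_simp
  -- reflection at 1/6
  have h16 : Real.Gamma (1/6) * Real.Gamma (5/6) = 2 * π := by
    have := Real.Gamma_mul_Gamma_one_sub (1/6)
    rw [show (1:ℝ) - 1/6 = 5/6 by norm_num, show π * (1/6 : ℝ) = π/6 by ring,
      Real.sin_pi_div_six] at this
    rw [this]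
    ring
  -- duplication at 1/6
  have hdup : Real.Gamma (1/6) * Real.Gamma (2/3) = G3 * a ^ 2 * c := by
    have := Real.Gamma_mul_Gamma_add_half (1/6)
    rw [show (1:ℝ)/6 + 1/2 = 2/3 by norm_num, show 2 * (1/6 : ℝ) = 1/3 by norm_num,
      show (1:ℝ) - 1/3 = 2/3 by norm_num] at this
    rw [this, hpow2, hG3def, hcdef]
  -- solve
  have e23 : Real.Gamma (2/3) = 2 * π / (b * G3) := by
    field_simp
    linear_combination h13
  have e16 : Real.Gamma (1/6) = G3 ^ 2 * a ^ 2 * c * b / (2 * π) := by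
    rw [e23] at hdup
    field_simp at hdup ⊢
    linear_combination hdup
  have e56 : Real.Gamma (5/6) = 2 * π / Real.Gamma (1/6) := by
    field_simp
    linear_combination h16
  rw [Real.Gamma_one_half_eq, ← hcdef, e56, e16, h27]
  field_simp
  linear_combination (b^4*c^2) * ha3 + (2*c^2*(b^2+3)) * hb2 + 18 * hc2

lemma conj2 : (1/3 : ℝ) * ∫ u in (0:ℝ)..1, u ^ (-(2:ℝ)/3) * ((1 + u/2) * (1 + u/8)) ^ (-(1:ℝ)/2) =
    Real.Gamma (1/3) ^ 3 / (Real.sqrt 27 * (2:ℝ) ^ ((1:ℝ)/3) * π) := by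
  have hbeta := real_betaIntegral (show (0:ℝ) < 1/3 by norm_num) (show (0:ℝ) < 1/2 by norm_num)
  rw [subst_key, show (1:ℝ)/3 + 1/2 = 5/6 by norm_num] at hbeta
  have hI : ∫ u in (0:ℝ)..1, u ^ (-(2:ℝ)/3) * ((1 + u/2) * (1 + u/8)) ^ (-(1:ℝ)/2) =
      2/3 * (Real.Gamma (1/3) * Real.Gamma (1/2) / Real.Gamma (5/6)) := by
    linarith
  rw [hI, gamma_algebra]

theorem appell_value_goursat' :
    appellF1 (1/3) (1/2) (1/2) (4/3) (-(1/2)) (-(1/8)) =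
      ((Real.Gamma (1/3) ^ 3 / (Real.sqrt 27 * (2:ℝ) ^ ((1:ℝ)/3) * Real.pi) : ℝ) : ℂ) ∧
    (1/3) * ∫ u in (0:ℝ)..1, u ^ (-(2:ℝ)/3) * ((1 + u/2) * (1 + u/8)) ^ (-(1:ℝ)/2) =
      Real.Gamma (1/3) ^ 3 / (Real.sqrt 27 * (2:ℝ) ^ ((1:ℝ)/3) * Real.pi) := by
  refine ⟨?_, conj2⟩
  unfold appellF1 lauricellaFD
  have hsub : (4/3 : ℂ) - 1/3 = 1 := by norm_num
  have hne : Complex.Gamma (1/3 : ℂ) ≠ 0 := by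
    apply Complex.Gamma_ne_zero_of_re_pos
    simp
  have h43 : Complex.Gamma (4/3) = (1/3 : ℂ) * Complex.Gamma (1/3) := by
    rw [show (4/3 : ℂ) = 1/3 + 1 by norm_num, Complex.Gamma_add_one _ (by norm_num)]
  have hpref : Complex.Gamma (4/3) / (Complex.Gamma (1/3) * Complex.Gamma ((4/3 : ℂ) - 1/3)) =
      (1/3 : ℂ) := by
    rw [hsub, Complex.Gamma_one, mul_one, h43, mul_div_assoc, div_self hne, mul_one]
  have hint : (∫ u in (0:ℝ)..1, (u : ℂ) ^ ((1/3 : ℂ) - 1) * ((1:ℂ) - u) ^ ((4/3 : ℂ) - 1/3 - 1) *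
        ∏ k, ((1:ℂ) - ![-(1/2 : ℂ), -(1/8)] k * u) ^ (-(![(1/2 : ℂ), 1/2] k))) =
      ((∫ u in (0:ℝ)..1, u ^ (-(2:ℝ)/3) * ((1 + u/2) * (1 + u/8)) ^ (-(1:ℝ)/2) : ℝ) : ℂ) := by
    rw [← intervalIntegral.integral_ofReal]
    refine intervalIntegral.integral_congr fun x hx => ?_
    rw [Set.uIcc_of_le zero_le_one] at hx
    obtain ⟨hx0, hx1⟩ := hx
    have h2 : (0:ℝ) ≤ 1 + x/2 := by linarith
    have h8 : (0:ℝ) ≤ 1 + x/8 := by linarith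
    rw [Fin.prod_univ_two]
    simp only [Matrix.cons_val_zero, Matrix.cons_val_one, Matrix.head_cons]
    rw [show (4/3 : ℂ) - 1/3 - 1 = 0 by norm_num, Complex.cpow_zero, mul_one]
    rw [Real.mul_rpow h2 h8, Complex.ofReal_mul, Complex.ofReal_mul,
      Complex.ofReal_cpow hx0, Complex.ofReal_cpow h2, Complex.ofReal_cpow h8]
    rw [show ((-(2:ℝ)/3 : ℝ) : ℂ) = (1/3 : ℂ) - 1 by push_cast; norm_num,
      show ((-(1:ℝ)/2 : ℝ) : ℂ) = -(1/2 : ℂ) by push_cast; norm_num,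
      show ((1 + x/2 : ℝ) : ℂ) = 1 - -(1/2 : ℂ) * x by push_cast; ring,
      show ((1 + x/8 : ℝ) : ℂ) = 1 - -(1/8 : ℂ) * x by push_cast; ring]
  rw [hpref, hint, conj2.symm]
  push_cast
  ring
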